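/- There exists a constant C > 0, depending only on w_- and w_+, such that for all t > 0, δ > 0 and p ∈ [1, ∞]: ‖∂²_x w^r_δ(·,t)‖_{L^p(ℝ)} ≤ C (δ + t)^{−1} δ^{−1 + 1/p}. -/

import Mathlib

open MeasureTheory
open scoped ENNReal

open Set Filter
open scoped Topology

section AUX
noncomputable def sech2 (y : ℝ) : ℝ := (Real.cosh y ^ 2)⁻¹


lemma sech2_pos (y : ℝ) : 0 < sech2 y := by
  have := Real.cosh_pos y
  rw [sech2]
  positivity

lemma sech2_le_one (y : ℝ) : sech2 y ≤ 1 := by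
  rw [sech2, inv_le_one_iff₀]
  right
  nlinarith [Real.one_le_cosh y]

lemma tanh_sq_eq (y : ℝ) : Real.tanh y ^ 2 = 1 - sech2 y := by
  have h := Real.cosh_sq_sub_sinh_sq y
  have hc : Real.cosh y ≠ 0 := (Real.cosh_pos y).ne'
  rw [Real.tanh_eq_sinh_div_cosh, sech2]
  field_simp
  nlinarith

lemma abs_tanh_le_one (y : ℝ) : |Real.tanh y| ≤ 1 := by
  have h1 := tanh_sq_eq y
  have h2 := sech2_pos y
  nlinarith [abs_nonneg (Real.tanh y), sq_abs (Real.tanh y)]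

lemma hasDerivAt_sech2 (v : ℝ) : HasDerivAt sech2 (-2 * Real.tanh v * sech2 v) v := by
  have hc : Real.cosh v ≠ 0 := (Real.cosh_pos v).ne'
  have h1 : HasDerivAt (fun x => Real.cosh x ^ 2) (2 * Real.cosh v ^ 1 * Real.sinh v) v :=
    (Real.hasDerivAt_cosh v).pow 2
  have h2 := h1.inv (by positivity)
  refine h2.congr_deriv ?_
  rw [Real.tanh_eq_sinh_div_cosh, sech2]
  field_simp

lemma hasDerivAt_tanh (v : ℝ) : HasDerivAt Real.tanh (sech2 v) v := by
  have hc : Real.cosh v ≠ 0 := (Real.cosh_pos v).ne'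
  have h := (Real.hasDerivAt_sinh v).div (Real.hasDerivAt_cosh v) hc
  have heq : (Real.sinh / Real.cosh) = Real.tanh := by
    funext x; rw [Pi.div_apply, Real.tanh_eq_sinh_div_cosh]
  rw [heq] at h
  refine h.congr_deriv ?_
  rw [sech2]
  have := Real.cosh_sq_sub_sinh_sq v
  field_simp
  nlinarith

noncomputable def G1 (a δ y : ℝ) : ℝ := a / δ * sech2 (y / δ)
noncomputable def G2 (a δ y : ℝ) : ℝ := -(2 * a / δ ^ 2) * Real.tanh (y / δ) * sech2 (y / δ)

lemma G1_pos (a δ : ℝ) (ha : 0 < a) (hδ : 0 < δ) (y : ℝ) : 0 < G1 a δ y := by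
  have := sech2_pos (y / δ); rw [G1]; positivity

lemma hasDerivAt_wδ (a m δ : ℝ) (hδ : δ ≠ 0) (y : ℝ) :
    HasDerivAt (fun x => m + a * Real.tanh (x / δ)) (G1 a δ y) y := by
  have h0 : HasDerivAt (fun x : ℝ => x / δ) (1 / δ) y := by
    simpa using (hasDerivAt_id y).div_const δ
  have h1 : HasDerivAt (fun x : ℝ => Real.tanh (x / δ)) (sech2 (y / δ) * (1 / δ)) y :=
    HasDerivAt.comp (h₂ := Real.tanh) y (hasDerivAt_tanh (y / δ)) h0
  have h2 := (h1.const_mul a).const_add m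
  refine h2.congr_deriv ?_
  rw [G1]; ring

lemma hasDerivAt_G1 (a δ : ℝ) (hδ : δ ≠ 0) (y : ℝ) :
    HasDerivAt (G1 a δ) (G2 a δ y) y := by
  have h0 : HasDerivAt (fun x : ℝ => x / δ) (1 / δ) y := by
    simpa using (hasDerivAt_id y).div_const δ
  have h1 : HasDerivAt (fun x : ℝ => sech2 (x / δ))
      ((-2 * Real.tanh (y / δ) * sech2 (y / δ)) * (1 / δ)) y :=
    HasDerivAt.comp (h₂ := sech2) y (hasDerivAt_sech2 (y / δ)) h0
  have h2 := h1.const_mul (a / δ)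
  refine h2.congr_deriv ?_
  rw [G2]; field_simp

lemma G1_even (a δ : ℝ) (y : ℝ) : G1 a δ (-y) = G1 a δ y := by
  rw [G1, G1, neg_div, sech2, sech2, Real.cosh_neg]

lemma G2_odd (a δ : ℝ) (y : ℝ) : G2 a δ (-y) = -G2 a δ y := by
  rw [G2, G2, neg_div, sech2, sech2, Real.cosh_neg, Real.tanh_neg]
  ring

lemma tendsto_G1_atTop (a δ : ℝ) (hδ : 0 < δ) : Tendsto (G1 a δ) atTop (𝓝 0) := by
  have h0 : Tendsto (fun y : ℝ => Real.exp (y / δ) / 2) atTop atTop := by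
    have := (Real.tendsto_exp_atTop.comp (tendsto_id.atTop_div_const hδ)).atTop_div_const two_pos
    simpa [Function.comp] using this
  have h1 : Tendsto (fun y : ℝ => Real.cosh (y / δ) ^ 2) atTop atTop := by
    apply tendsto_atTop_mono (fun y => ?_) h0
    have h := Real.cosh_eq (y / δ)
    have hle : Real.exp (y / δ) / 2 ≤ Real.cosh (y / δ) := by
      rw [h]; have := (Real.exp_pos (-(y / δ))).le; linarith
    nlinarith [Real.one_le_cosh (y / δ), (Real.exp_pos (y / δ)).le]
  have h2 : Tendsto (fun y : ℝ => sech2 (y / δ)) atTop (𝓝 0) := h1.inv_tendsto_atTop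
  have := h2.const_mul (a / δ)
  rw [mul_zero] at this; exact this

lemma tendsto_G1_atBot (a δ : ℝ) (hδ : 0 < δ) : Tendsto (G1 a δ) atBot (𝓝 0) := by
  have h := (tendsto_G1_atTop a δ hδ).comp tendsto_neg_atBot_atTop
  have heq : (G1 a δ ∘ fun y => -y) = G1 a δ ∘ fun y => -y := rfl
  have : ∀ y : ℝ, (G1 a δ ∘ fun z => -z) y = G1 a δ y := by
    intro y; simp [Function.comp, G1_even]
  exact Tendsto.congr this h

lemma key_inf (a δ t s τ : ℝ) (ha : 0 < a) (hδ : 0 < δ) (ht : 0 < t)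
    (hs : 0 < s) (hs1 : s ≤ 1) (hτ : |τ| ≤ 1) :
    |(-(2 * a / δ ^ 2) * τ * s) / (1 + a / δ * s * t) ^ 3| ≤ (2*a+2) / (δ * (δ + t)) := by
  have he : 0 ≤ a / δ * s * t := by positivity
  have hD : 0 < 1 + a / δ * s * t := by positivity
  have hD1 : 1 ≤ 1 + a / δ * s * t := by linarith
  rw [abs_div, abs_of_pos (by positivity : (0:ℝ) < (1 + a / δ * s * t) ^ 3)]
  have hnum : |(-(2 * a / δ ^ 2) * τ * s)| ≤ 2 * a / δ ^ 2 * s := by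
    rw [abs_mul, abs_mul, abs_neg, abs_of_pos (by positivity : (0:ℝ) < 2 * a / δ ^ 2),
      abs_of_pos hs]
    exact mul_le_mul_of_nonneg_right (mul_le_of_le_one_right (by positivity) hτ) hs.le
  have hcube : 1 + a / δ * s * t ≤ (1 + a / δ * s * t) ^ 3 := by
    nlinarith [he, sq_nonneg (a / δ * s * t), mul_nonneg he he]
  calc |(-(2 * a / δ ^ 2) * τ * s)| / (1 + a / δ * s * t) ^ 3
      ≤ (2 * a / δ ^ 2 * s) / (1 + a / δ * s * t) ^ 3 := by gcongr
    _ ≤ (2 * a / δ ^ 2 * s) / (1 + a / δ * s * t) := by gcongr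
    _ ≤ (2*a+2) / (δ * (δ + t)) := by
        rw [div_le_div_iff₀ (by positivity) (by positivity)]
        have h1 : 2 * a / δ ^ 2 * s * (δ * (δ + t)) = 2 * a * s * (δ + t) / δ := by
          field_simp
        have h2 : (2*a+2) * (1 + a / δ * s * t) = ((2*a+2) * (δ + a * s * t)) / δ := by
          field_simp
        rw [h1, h2]
        gcongr (?_ : ℝ) / δ
        nlinarith [mul_nonneg (mul_nonneg ha.le hδ.le) (sub_nonneg.2 hs1),
          mul_pos (mul_pos (mul_pos ha ha) hs) ht]

lemma key_ineq1 (a δ t : ℝ) (ha : 0 < a) (hδ : 0 < δ) (ht : 0 < t) :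
    2 * a / (δ + a * t) ≤ (2*a+2) / (δ + t) := by
  rw [div_le_div_iff₀ (by positivity) (by positivity)]
  nlinarith [sq_nonneg a, mul_pos ha ht]

end AUX

lemma key_eq (Cc δ t q : ℝ) (hC : 0 < Cc) (hδ : 0 < δ) (ht : 0 < t) (hq : 1 ≤ q) :
    ((Cc / (δ * (δ + t))) ^ (q-1) * (Cc / (δ + t))) ^ (1/q)
      = Cc * (δ + t)⁻¹ * δ ^ (-1 + 1/q) := by
  have hq0 : 0 < q := by linarith
  set B := Cc / (δ + t) with hB
  have hBpos : 0 < B := by rw [hB]; positivity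
  have h1 : Cc / (δ * (δ + t)) = B * δ⁻¹ := by
    rw [hB, div_mul_eq_div_div_swap, div_eq_mul_inv]
  rw [h1, Real.mul_rpow hBpos.le (by positivity)]
  have h2 : B ^ (q-1) * δ⁻¹ ^ (q-1) * B = B ^ q * δ⁻¹ ^ (q-1) := by
    rw [mul_right_comm]
    congr 1
    nth_rewrite 2 [← Real.rpow_one B]
    rw [← Real.rpow_add hBpos]
    norm_num
  rw [h2, Real.mul_rpow (Real.rpow_nonneg hBpos.le _) (Real.rpow_nonneg (by positivity) _),
    ← Real.rpow_mul hBpos.le, mul_one_div, div_self hq0.ne', Real.rpow_one,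
    ← Real.rpow_mul (inv_nonneg.2 hδ.le), Real.inv_rpow hδ.le, ← Real.rpow_neg hδ.le]
  rw [hB, div_eq_mul_inv]
  congr 1
  field_simp
  ring


lemma main_aux (a m δ t : ℝ) (ha : 0 < a) (hδ : 0 < δ) (ht : 0 < t)
    (X : ℝ → ℝ) (hXright : ∀ x, X x + (m + a * Real.tanh (X x / δ)) * t = x)
    (p : ℝ≥0∞) (hp : 1 ≤ p) :
    eLpNorm (fun x => iteratedDeriv 2 (fun z => m + a * Real.tanh (X z / δ)) x) p volume
      ≤ ENNReal.ofReal ((2*a+2) * (δ + t)⁻¹ * δ ^ (-1 + 1/p.toReal)) := by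
  set F : ℝ → ℝ := fun y => y + (m + a * Real.tanh (y / δ)) * t with hF
  set D : ℝ → ℝ := fun y => 1 + G1 a δ y * t with hD
  have hright : ∀ x, F (X x) = x := hXright
  have hDpos : ∀ y, 0 < D y := by
    intro y
    have := G1_pos a δ ha hδ y
    rw [hD]; positivity
  have hF' : ∀ y, HasDerivAt F (D y) y := by
    intro y
    have h := (hasDerivAt_id y).add ((hasDerivAt_wδ a m δ hδ.ne' y).mul_const t)
    simpa [hF, hD, Pi.add_def] using h
  have hFmono : StrictMono F :=
    strictMono_of_deriv_pos (fun x => by rw [(hF' x).deriv]; exact hDpos x)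
  have hFinj : Function.Injective F := hFmono.injective
  have hleft : ∀ y, X (F y) = y := fun y => hFinj (hright (F y))
  have hFsurj : Function.Surjective F := fun x => ⟨X x, hright x⟩
  have hXe : X = ⇑(StrictMono.orderIsoOfSurjective F hFmono hFsurj).symm := by
    funext x
    apply hFinj
    rw [hright]
    have := (StrictMono.orderIsoOfSurjective F hFmono hFsurj).apply_symm_apply x
    rw [StrictMono.coe_orderIsoOfSurjective] at this
    exact this.symm
  have hXcont : Continuous X := by
    rw [hXe]; exact OrderIso.continuous _
  have hXmono : StrictMono X := by
    rw [hXe]; exact (StrictMono.orderIsoOfSurjective F hFmono hFsurj).symm.strictMono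
  have hX' : ∀ x, HasDerivAt X (D (X x))⁻¹ x := fun x =>
    HasDerivAt.of_local_left_inverse hXcont.continuousAt (hF' (X x)) (hDpos (X x)).ne'
      (Filter.Eventually.of_forall hright)
  set W1 : ℝ → ℝ := fun x => G1 a δ (X x) / D (X x) with hW1
  set W2 : ℝ → ℝ := fun x => G2 a δ (X x) / D (X x) ^ 3 with hW2
  have hφ : ∀ y, HasDerivAt (fun z => G1 a δ z / D z) (G2 a δ y / D y ^ 2) y := by
    intro y
    have hD' : HasDerivAt D (G2 a δ y * t) y := by
      have := ((hasDerivAt_G1 a δ hδ.ne' y).mul_const t).const_add 1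
      simpa [hD] using this
    have h := (hasDerivAt_G1 a δ hδ.ne' y).div hD' (hDpos y).ne'
    refine h.congr_deriv ?_
    rw [hD]
    field_simp
    ring
  have hW1' : ∀ x, HasDerivAt W1 (W2 x) x := by
    intro x
    have h := (hφ (X x)).comp x (hX' x)
    refine h.congr_deriv ?_
    rw [hW2]
    simp only []
    rw [div_eq_mul_inv, div_eq_mul_inv]
    rw [pow_succ]
    rw [mul_inv]
    ring
  have hwt' : ∀ x, HasDerivAt (fun z => m + a * Real.tanh (X z / δ)) (W1 x) x := by
    intro x
    have h := (hasDerivAt_wδ a m δ hδ.ne' (X x)).comp x (hX' x)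
    have heq : W1 x = G1 a δ (X x) * (D (X x))⁻¹ := div_eq_mul_inv _ _
    rw [heq]
    simpa [Function.comp_def] using h
  have hiter : (fun x => iteratedDeriv 2 (fun z => m + a * Real.tanh (X z / δ)) x) = W2 := by
    funext x
    rw [iteratedDeriv_succ, iteratedDeriv_one]
    have h1 : deriv (fun z => m + a * Real.tanh (X z / δ)) = W1 := funext fun z => (hwt' z).deriv
    rw [h1, (hW1' x).deriv]
  rw [hiter]
  -- sup bound
  have hMbound : ∀ x, ‖W2 x‖ ≤ (2*a+2) / (δ * (δ + t)) := by
    intro x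
    have h := key_inf a δ t (sech2 (X x / δ)) (Real.tanh (X x / δ)) ha hδ ht
      (sech2_pos _) (sech2_le_one _) (abs_tanh_le_one _)
    have hrw : W2 x = -(2 * a / δ ^ 2) * Real.tanh (X x / δ) * sech2 (X x / δ) /
        (1 + a / δ * sech2 (X x / δ) * t) ^ 3 := by
      simp only [hW2, hD, G2, G1]
    rw [Real.norm_eq_abs, hrw]
    exact h
  -- L1 bound
  set c : ℝ := m * t with hc
  have hF0 : F 0 = c := by
    simp only [hF, hc, zero_div, Real.tanh_zero]
    ring
  have hXc : X c = 0 := by rw [← hF0]; exact hleft 0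
  have hFsym : ∀ y, F (-y) = 2 * c - F y := by
    intro y
    simp only [hF, hc, neg_div, Real.tanh_neg]
    ring
  have hXsym : ∀ x, X (2 * c - x) = -(X x) := by
    intro x
    have h1 := hFsym (X x)
    rw [hright] at h1
    rw [← h1, hleft]
  have hDsym : ∀ y, D (-y) = D y := by
    intro y; simp only [hD]; rw [G1_even]
  have hW2sym : ∀ x, W2 (2 * c - x) = -(W2 x) := by
    intro x
    simp only [hW2]
    rw [hXsym, G2_odd, hDsym, neg_div]
  have hbound : ∀ y : ℝ, |m + a * Real.tanh (y / δ)| ≤ |m| + a := by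
    intro y
    calc |m + a * Real.tanh (y / δ)| ≤ |m| + |a * Real.tanh (y / δ)| := abs_add_le _ _
      _ ≤ |m| + a := by
          rw [abs_mul, abs_of_pos ha]
          nlinarith [abs_tanh_le_one (y / δ), abs_nonneg (Real.tanh (y / δ))]
  have hXx : ∀ x, x - (|m| + a) * t ≤ X x ∧ X x ≤ x + (|m| + a) * t := by
    intro x
    have h := hXright x
    have hb := hbound (X x)
    have h1 : -(|m| + a) ≤ m + a * Real.tanh (X x / δ) := neg_le_of_abs_le hb
    have h2 : m + a * Real.tanh (X x / δ) ≤ |m| + a := le_of_abs_le hb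
    constructor <;> nlinarith
  have hXtop : Tendsto X atTop atTop := by
    apply tendsto_atTop_mono (fun x => (hXx x).1)
    have := tendsto_atTop_add_const_right atTop (-((|m| + a) * t)) (tendsto_id (α := ℝ))
    simpa [sub_eq_add_neg] using this
  have hXbot : Tendsto X atBot atBot := by
    apply tendsto_atBot_mono (fun x => (hXx x).2)
    exact tendsto_atBot_add_const_right atBot ((|m| + a) * t) (tendsto_id (α := ℝ))
  have hW1top : Tendsto W1 atTop (𝓝 0) := by
    have hg1 : Tendsto (fun x => G1 a δ (X x)) atTop (𝓝 0) :=
      (tendsto_G1_atTop a δ hδ).comp hXtop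
    have hden : Tendsto (fun x => D (X x)) atTop (𝓝 (1 + 0 * t)) := by
      simp only [hD]
      exact (hg1.mul_const t).const_add 1
    have h := hg1.div hden (by norm_num)
    simp only [zero_mul, add_zero, zero_div] at h; exact h
  have hW2nonpos : ∀ x ∈ Ioi c, W2 x ≤ 0 := by
    intro x hx
    have hXpos : 0 < X x := by rw [← hXc]; exact hXmono hx
    have htanh : 0 < Real.tanh (X x / δ) := by
      rw [Real.tanh_eq_sinh_div_cosh]
      exact div_pos (Real.sinh_pos_iff.2 (by positivity)) (Real.cosh_pos _)
    have hG2 : G2 a δ (X x) ≤ 0 := by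
      rw [G2]
      nlinarith [mul_pos htanh (sech2_pos (X x / δ)),
        div_pos (by linarith : (0:ℝ) < 2 * a) (pow_pos hδ 2)]
    simp only [hW2]
    exact div_nonpos_of_nonpos_of_nonneg hG2 (pow_pos (hDpos (X x)) 3).le
  have hderivIci : ∀ x ∈ Ici c, HasDerivAt (fun z => -W1 z) (-W2 x) x :=
    fun x _ => (hW1' x).neg
  have hW2neg_nonneg : ∀ x ∈ Ioi c, 0 ≤ -W2 x := fun x hx => by linarith [hW2nonpos x hx]
  have hnegtop : Tendsto (fun z => -W1 z) atTop (𝓝 0) := by simpa using hW1top.neg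
  have hint : IntegrableOn (fun x => -W2 x) (Ioi c) volume :=
    integrableOn_Ioi_deriv_of_nonneg' hderivIci hW2neg_nonneg hnegtop
  have hW1c : W1 c = a / (δ + a * t) := by
    simp only [hW1, hD, G1]
    rw [hXc, zero_div, sech2, Real.cosh_zero]
    field_simp
  have hval : ∫ x in Ioi c, -W2 x = a / (δ + a * t) := by
    have h := integral_Ioi_of_hasDerivAt_of_nonneg' hderivIci hW2neg_nonneg hnegtop
    rw [h, hW1c]
    ring
  have hIoi : ∫⁻ x in Ioi c, (‖W2 x‖₊ : ℝ≥0∞) = ENNReal.ofReal (a / (δ + a * t)) := by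
    have h1 : ∫⁻ x in Ioi c, (‖W2 x‖₊ : ℝ≥0∞) = ∫⁻ x in Ioi c, ENNReal.ofReal (-W2 x) := by
      apply setLIntegral_congr_fun measurableSet_Ioi
      intro x hx
      beta_reduce
      rw [← enorm_eq_nnnorm, ← ofReal_norm, Real.norm_eq_abs, abs_of_nonpos (hW2nonpos x hx)]
    rw [h1, ← ofReal_integral_eq_lintegral_ofReal hint
      ((ae_restrict_iff' measurableSet_Ioi).2 (Filter.Eventually.of_forall hW2neg_nonneg)), hval]
  have hmp : MeasurePreserving (fun x : ℝ => 2 * c - x) volume volume :=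
    Measure.measurePreserving_sub_left volume (2 * c)
  have hemb : MeasurableEmbedding (fun x : ℝ => 2 * c - x) := by
    have h := ((Homeomorph.neg ℝ).trans (Homeomorph.addLeft (2 * c))).measurableEmbedding
    have heq : ⇑((Homeomorph.neg ℝ).trans (Homeomorph.addLeft (2 * c))) =
        fun x : ℝ => 2 * c - x := by
      funext x
      simp [sub_eq_add_neg]
    rwa [heq] at h
  have hpre : (fun x : ℝ => 2 * c - x) ⁻¹' (Iic c) = Ici c := by
    ext x
    simp only [mem_preimage, mem_Iic, mem_Ici]
    constructor <;> intro h <;> linarith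
  have hIic : ∫⁻ x in Iic c, (‖W2 x‖₊ : ℝ≥0∞) = ∫⁻ x in Ici c, (‖W2 x‖₊ : ℝ≥0∞) := by
    have h := hmp.setLIntegral_comp_preimage_emb hemb (fun x => (‖W2 x‖₊ : ℝ≥0∞)) (Iic c)
    rw [hpre] at h
    rw [← h]
    apply setLIntegral_congr_fun measurableSet_Ici
    intro x _
    simp only [hW2sym, nnnorm_neg]
  have hIoiIci : ∫⁻ x in Ioi c, (‖W2 x‖₊ : ℝ≥0∞) = ∫⁻ x in Ici c, (‖W2 x‖₊ : ℝ≥0∞) :=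
    setLIntegral_congr Ioi_ae_eq_Ici
  have htotal : ∫⁻ x, (‖W2 x‖₊ : ℝ≥0∞) ∂volume = ENNReal.ofReal (2 * a / (δ + a * t)) := by
    calc ∫⁻ x, (‖W2 x‖₊ : ℝ≥0∞) ∂volume
        = (∫⁻ x in Iio c, (‖W2 x‖₊ : ℝ≥0∞)) + ∫⁻ x in Ici c, (‖W2 x‖₊ : ℝ≥0∞) := by
          rw [← lintegral_add_compl (fun x => (‖W2 x‖₊ : ℝ≥0∞)) (measurableSet_Iio (a := c)),
            compl_Iio]
      _ = (∫⁻ x in Iic c, (‖W2 x‖₊ : ℝ≥0∞)) + ∫⁻ x in Ici c, (‖W2 x‖₊ : ℝ≥0∞) := by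
          rw [setLIntegral_congr Iio_ae_eq_Iic]
      _ = ENNReal.ofReal (a / (δ + a * t)) + ENNReal.ofReal (a / (δ + a * t)) := by
          rw [hIic, ← hIoiIci, hIoi]
      _ = ENNReal.ofReal (2 * a / (δ + a * t)) := by
          rw [← ENNReal.ofReal_add (by positivity) (by positivity)]
          congr 1
          ring
  have hL1 : ∫⁻ x, (‖W2 x‖₊ : ℝ≥0∞) ∂volume ≤ ENNReal.ofReal ((2*a+2) / (δ + t)) := by
    rw [htotal]
    exact ENNReal.ofReal_le_ofReal (key_ineq1 a δ t ha hδ ht)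
  -- conclude
  by_cases hptop : p = ⊤
  · rw [hptop, eLpNorm_exponent_top]
    refine le_trans (eLpNormEssSup_le_of_ae_bound (Filter.Eventually.of_forall hMbound)) ?_
    apply ENNReal.ofReal_le_ofReal
    have hrw : -1 + 1 / (⊤ : ℝ≥0∞).toReal = (-1 : ℝ) := by
      simp [ENNReal.toReal_top]
    rw [hrw, Real.rpow_neg_one]
    apply le_of_eq
    field_simp
  · have hp0 : p ≠ 0 := (lt_of_lt_of_le zero_lt_one hp).ne'
    have hq1 : 1 ≤ p.toReal := by
      have := ENNReal.toReal_mono hptop hp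
      simpa using this
    have hq0 : 0 < p.toReal := lt_of_lt_of_le zero_lt_one hq1
    set q := p.toReal with hqdef
    set M : ℝ := (2*a+2) / (δ * (δ + t)) with hM
    set B : ℝ := (2*a+2) / (δ + t) with hB
    have hMpos : 0 < M := by rw [hM]; positivity
    have hBpos : 0 < B := by rw [hB]; positivity
    rw [eLpNorm_eq_lintegral_rpow_enorm_toReal hp0 hptop]
    have hpt : ∀ x, (‖W2 x‖₊ : ℝ≥0∞) ^ q ≤ ENNReal.ofReal M ^ (q - 1) * (‖W2 x‖₊ : ℝ≥0∞) := by
      intro x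
      have hb : (‖W2 x‖₊ : ℝ≥0∞) ≤ ENNReal.ofReal M := by
        rw [← enorm_eq_nnnorm, ← ofReal_norm]
        exact ENNReal.ofReal_le_ofReal (hMbound x)
      calc (‖W2 x‖₊ : ℝ≥0∞) ^ q
          = (‖W2 x‖₊ : ℝ≥0∞) ^ (q - 1) * (‖W2 x‖₊ : ℝ≥0∞) ^ (1:ℝ) := by
            rw [← ENNReal.rpow_add_of_nonneg _ _ (by linarith) zero_le_one]
            norm_num
        _ ≤ ENNReal.ofReal M ^ (q - 1) * (‖W2 x‖₊ : ℝ≥0∞) := by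
            rw [ENNReal.rpow_one]
            exact mul_le_mul_left (ENNReal.rpow_le_rpow hb (by linarith)) _
    have hmain : ∫⁻ x, (‖W2 x‖₊ : ℝ≥0∞) ^ q ≤ ENNReal.ofReal M ^ (q-1) * ENNReal.ofReal B := by
      refine le_trans (lintegral_mono hpt) ?_
      rw [lintegral_const_mul' _ _ (ENNReal.rpow_ne_top_of_nonneg (by linarith) ENNReal.ofReal_ne_top)]
      exact mul_le_mul_right hL1 _
    calc (∫⁻ x, (‖W2 x‖₊ : ℝ≥0∞) ^ q) ^ (1/q)
        ≤ (ENNReal.ofReal M ^ (q-1) * ENNReal.ofReal B) ^ (1/q) :=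
          ENNReal.rpow_le_rpow hmain (by positivity)
      _ = ENNReal.ofReal ((M ^ (q-1) * B) ^ (1/q)) := by
          rw [ENNReal.ofReal_rpow_of_pos hMpos, ← ENNReal.ofReal_mul (by positivity),
            ENNReal.ofReal_rpow_of_pos (by positivity)]
      _ = ENNReal.ofReal ((2*a+2) * (δ + t)⁻¹ * δ ^ (-1 + 1/q)) := by
          rw [hM, hB, key_eq (2*a+2) δ t q (by linarith) hδ ht hq1]


/-- the L^p bound on the second spatial derivative of the Burgers
solution: ‖∂²ₓ w^r_δ(·,t)‖_{L^p} ≤ C (δ+t)^{−1} δ^{−1+1/p} for all t > 0,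
δ > 0 and p ∈ [1,∞], with C depending only on w₋, w₊. -/
theorem burgers_second_derivative_Lp_bound (wm wp : ℝ) (hw : wm < wp) :
    ∃ C > (0 : ℝ), ∀ δ : ℝ, 0 < δ →
      ∀ wδ : ℝ → ℝ,
        (∀ x, wδ x = (wp + wm) / 2 + (wp - wm) / 2 * Real.tanh (x / δ)) →
      ∀ x₀ : ℝ → ℝ → ℝ,
        (∀ x t : ℝ, 0 ≤ t → x₀ x t + wδ (x₀ x t) * t = x) →
      ∀ w : ℝ → ℝ → ℝ,
        (∀ x t : ℝ, 0 ≤ t → w x t = wδ (x₀ x t)) →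
      ∀ t : ℝ, 0 < t → ∀ p : ℝ≥0∞, 1 ≤ p →
        eLpNorm (fun x => iteratedDeriv 2 (fun z => w z t) x) p volume
          ≤ ENNReal.ofReal
              (C * (δ + t)⁻¹ * δ ^ (-1 + 1 / p.toReal)) := by
  refine ⟨(wp - wm) + 2, by linarith, ?_⟩
  intro δ hδ wδ hwδ x₀ hx₀ w hw' t ht p hp
  have ha : 0 < (wp - wm) / 2 := by linarith
  have hXright : ∀ x, (fun x => x₀ x t) x
      + ((wp + wm) / 2 + (wp - wm) / 2 * Real.tanh ((fun x => x₀ x t) x / δ)) * t = x := by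
    intro x
    have h := hx₀ x t ht.le
    rw [hwδ] at h
    exact h
  have h := main_aux ((wp - wm) / 2) ((wp + wm) / 2) δ t ha hδ ht (fun x => x₀ x t) hXright p hp
  have hfun : (fun z => w z t)
      = fun z => (wp + wm) / 2 + (wp - wm) / 2 * Real.tanh ((fun x => x₀ x t) z / δ) := by
    funext z
    rw [hw' z t ht.le, hwδ]
  have hCeq : (wp - wm + 2 : ℝ) = 2 * ((wp - wm) / 2) + 2 := by ring
  rw [hfun, hCeq]
  exact h
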